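/- arXiv:1705.02877 — 3 statements merged into one kernel-verified Lean document; each statement's English description precedes it below -/
import Mathlib

section
/- For every a ≥ 0 and every ε ∈ (0,1), there exists a unique b > 0 such that Q(a,b) = 1 − ε. (This is the value y = Q^{−1}(a, 1−ε) of the inverse Marcum Q-function with respect to its second argument.) -/
open Real MeasureTheory Filter

noncomputable def besselI0 (z : ℝ) : ℝ :=
  ∑' k : ℕ, (z / 2) ^ (2 * k) / ((Nat.factorial k : ℝ)) ^ 2

noncomputable def besselI1 (z : ℝ) : ℝ :=
  ∑' k : ℕ, (z / 2) ^ (2 * k + 1) / ((Nat.factorial k : ℝ) * (Nat.factorial (k + 1) : ℝ))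

noncomputable def marcumQ (a b : ℝ) : ℝ :=
  ∫ t in Set.Ioi b, t * Real.exp (-(t ^ 2 + a ^ 2) / 2) * besselI0 (a * t)

noncomputable def gaussQ (c : ℝ) : ℝ :=
  ∫ t in Set.Ioi c, (1 / Real.sqrt (2 * Real.pi)) * Real.exp (-t ^ 2 / 2)

section MarcumAux
open Set

lemma besselI0_term_eq (z : ℝ) (k : ℕ) :
    (z / 2) ^ (2 * k) / ((Nat.factorial k : ℝ)) ^ 2
      = ((z / 2) ^ 2) ^ k / ((Nat.factorial k : ℝ)) ^ 2 := by
  rw [pow_mul]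

lemma besselI0_summable (z : ℝ) :
    Summable (fun k : ℕ => (z / 2) ^ (2 * k) / ((Nat.factorial k : ℝ)) ^ 2) := by
  simp only [besselI0_term_eq]
  refine Summable.of_nonneg_of_le (fun k => by positivity) (fun k => ?_)
    (Real.summable_pow_div_factorial ((z / 2) ^ 2))
  have h1 : (1 : ℝ) ≤ (Nat.factorial k : ℝ) := by
    exact_mod_cast Nat.one_le_iff_ne_zero.mpr (Nat.factorial_ne_zero k)
  gcongr
  nlinarith

lemma one_le_besselI0 (z : ℝ) : 1 ≤ besselI0 z := by
  have h := Summable.le_tsum (besselI0_summable z) 0 (fun k _ => by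
    rw [besselI0_term_eq]; positivity)
  simpa [besselI0] using h

lemma factorial_two_mul_le (k : ℕ) :
    (Nat.factorial (2 * k) : ℝ) ≤ 2 ^ (2 * k) * (Nat.factorial k : ℝ) ^ 2 := by
  have hchoose : Nat.choose (2 * k) k ≤ 2 ^ (2 * k) := by
    calc Nat.choose (2 * k) k ≤ ∑ m ∈ Finset.range (2 * k + 1), Nat.choose (2 * k) m :=
          Finset.single_le_sum (fun i _ => Nat.zero_le _)
            (Finset.mem_range.mpr (by omega))
      _ = 2 ^ (2 * k) := Nat.sum_range_choose (2 * k)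
  have hfact : Nat.choose (2 * k) k * Nat.factorial k * Nat.factorial k
      = Nat.factorial (2 * k) := by
    have := Nat.choose_mul_factorial_mul_factorial (by omega : k ≤ 2 * k)
    simpa [show 2 * k - k = k by omega] using this
  have : Nat.factorial (2 * k) ≤ 2 ^ (2 * k) * Nat.factorial k ^ 2 := by
    rw [← hfact]; nlinarith [Nat.factorial_pos k, hchoose]
  exact_mod_cast this

lemma real_exp_eq_tsum (z : ℝ) : Real.exp z = ∑' n : ℕ, z ^ n / (Nat.factorial n : ℝ) := by
  rw [Real.exp_eq_exp_ℝ, NormedSpace.exp_eq_tsum_div]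

lemma besselI0_le_exp {z : ℝ} (hz : 0 ≤ z) : besselI0 z ≤ Real.exp z := by
  rw [real_exp_eq_tsum]
  refine Summable.tsum_le_tsum_of_inj (fun k => 2 * k)
    (fun a b h => by simpa using h)
    (fun n _ => by positivity)
    (fun k => ?_)
    (besselI0_summable z)
    (Real.summable_pow_div_factorial z)
  rw [div_pow, div_div]
  exact div_le_div_of_nonneg_left (by positivity) (by positivity)
    (by exact_mod_cast factorial_two_mul_le k)

lemma besselI0_continuous : Continuous besselI0 := by
  rw [continuous_iff_continuousAt]
  intro x
  have hmem : Set.Icc (-(|x| + 1)) (|x| + 1) ∈ nhds x := by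
    apply Icc_mem_nhds <;> nlinarith [abs_nonneg x, neg_abs_le x, le_abs_self x]
  refine ContinuousWithinAt.continuousAt (ContinuousOn.continuousWithinAt ?_ ?_) hmem
  · refine continuousOn_tsum (f := fun k z => (z / 2) ^ (2 * k) / ((Nat.factorial k : ℝ)) ^ 2)
      (u := fun k => ((|x| + 1) / 2) ^ (2 * k) / ((Nat.factorial k : ℝ)) ^ 2)
      (fun k => (Continuous.continuousOn (by continuity))) (besselI0_summable (|x| + 1))
      (fun k z hz => ?_)
    have hzabs : |z| ≤ |x| + 1 := abs_le.mpr ⟨hz.1, hz.2⟩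
    rw [Real.norm_eq_abs, abs_div, abs_pow, abs_div, abs_two, abs_pow, sq_abs]
    gcongr (?_ / 2) ^ (2 * k) / _
  · exact Set.mem_Icc.mpr ⟨by nlinarith [neg_abs_le x], by nlinarith [le_abs_self x]⟩

noncomputable def mg (a t : ℝ) : ℝ := t * Real.exp (-(t ^ 2 + a ^ 2) / 2) * besselI0 (a * t)

lemma mg_continuous (a : ℝ) : Continuous (mg a) := by
  unfold mg
  exact (continuous_id.mul (by continuity)).mul (besselI0_continuous.comp (by continuity))

lemma mg_pos (a : ℝ) {t : ℝ} (ht : 0 < t) : 0 < mg a t := by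
  have h1 := one_le_besselI0 (a * t)
  have h2 := Real.exp_pos (-(t ^ 2 + a ^ 2) / 2)
  unfold mg
  exact mul_pos (mul_pos ht h2) (lt_of_lt_of_le zero_lt_one h1)

lemma mg_integrableOn {a : ℝ} (ha : 0 ≤ a) : IntegrableOn (mg a) (Ioi 0) := by
  have hψ : Integrable (fun u : ℝ => (u + a) * Real.exp (-(1/2) * u ^ 2)) := by
    have h1 := integrable_mul_exp_neg_mul_sq (b := 1/2) (by norm_num)
    have h2 := (integrable_exp_neg_mul_sq (b := 1/2) (by norm_num)).const_mul a
    have := h1.add h2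
    refine this.congr' ?_ (Eventually.of_forall fun u => ?_)
    · exact (Continuous.aestronglyMeasurable (by continuity))
    · simp only [Pi.add_apply]
      rw [Real.norm_eq_abs, Real.norm_eq_abs]
      congr 1
      ring
  have hφ : Integrable (fun t : ℝ => (t - a + a) * Real.exp (-(1/2) * (t - a) ^ 2)) := by
    exact hψ.comp_sub_right a
  refine Integrable.mono' hφ.integrableOn ((mg_continuous a).aestronglyMeasurable.restrict) ?_
  filter_upwards [ae_restrict_mem measurableSet_Ioi] with t ht
  have ht' : (0:ℝ) < t := ht
  have hb := besselI0_le_exp (mul_nonneg ha ht'.le)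
  have h1 := one_le_besselI0 (a * t)
  rw [Real.norm_eq_abs, abs_of_nonneg (mg_pos a ht').le]
  unfold mg
  have key : t * Real.exp (-(t ^ 2 + a ^ 2) / 2) * besselI0 (a * t)
      ≤ t * Real.exp (-(t ^ 2 + a ^ 2) / 2) * Real.exp (a * t) := by
    exact mul_le_mul_of_nonneg_left hb
      (mul_nonneg ht'.le (Real.exp_pos _).le)
  refine key.trans (le_of_eq ?_)
  rw [mul_assoc, ← Real.exp_add]
  ring_nf

-- the gaussian moment integral

lemma gauss_moment (k : ℕ) :
    ∫ t in Ioi (0:ℝ), t ^ (2 * k + 1) * Real.exp (-t ^ 2 / 2)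
      = 2 ^ k * (Nat.factorial k : ℝ) := by
  have h := integral_rpow_mul_exp_neg_mul_rpow (p := 2) (q := (2 * k + 1 : ℕ)) (b := 1/2)
    (by norm_num) (by push_cast; linarith [Nat.cast_nonneg (α := ℝ) k]) (by norm_num)
  rw [setIntegral_congr_fun measurableSet_Ioi (g := fun t =>
      t ^ ((2 * k + 1 : ℕ) : ℝ) * Real.exp (-(1/2) * t ^ (2:ℝ))) ?_]
  · rw [h]
    have h1 : (((2 * k + 1 : ℕ):ℝ) + 1) / 2 = (k : ℝ) + 1 := by push_cast; ring
    rw [h1, Real.Gamma_nat_eq_factorial k]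
    have h2 : -(((2 * k + 1 : ℕ):ℝ) + 1) / 2 = -((k:ℝ) + 1) := by push_cast; ring
    rw [h2]
    have h3 : ((1:ℝ)/2) ^ (-((k:ℝ) + 1)) = 2 ^ ((k:ℝ) + 1) := by
      rw [one_div, Real.inv_rpow (by norm_num), ← Real.rpow_neg (by norm_num), neg_neg]
    rw [h3]
    have h4 : (2:ℝ) ^ ((k:ℝ) + 1) = 2 ^ (k + 1 : ℕ) := by
      rw [← Real.rpow_natCast 2 (k+1)]; push_cast; ring_nf
    rw [h4, pow_succ]
    ring
  · intro t ht
    have e1 : t ^ ((2 * k + 1 : ℕ) : ℝ) = t ^ (2 * k + 1) := Real.rpow_natCast t _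
    have e2 : t ^ (2 : ℝ) = t ^ (2 : ℕ) := by
      rw [show (2:ℝ) = ((2:ℕ):ℝ) by norm_num, Real.rpow_natCast]
    simp only [e1, e2]
    congr 1
    ring

noncomputable def mgTerm (a : ℝ) (k : ℕ) (t : ℝ) : ℝ :=
  (Real.exp (-a ^ 2 / 2) * a ^ (2 * k) / (2 ^ (2 * k) * (Nat.factorial k : ℝ) ^ 2))
    * (t ^ (2 * k + 1) * Real.exp (-t ^ 2 / 2))

lemma mgTerm_eq (a : ℝ) (k : ℕ) (t : ℝ) :
    mgTerm a k t
      = t * Real.exp (-(t ^ 2 + a ^ 2) / 2) * ((a * t / 2) ^ (2 * k) / (Nat.factorial k : ℝ) ^ 2) := by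
  unfold mgTerm
  rw [show (-(t ^ 2 + a ^ 2) / 2) = (-t^2/2) + (-a^2/2) by ring, Real.exp_add]
  rw [div_pow, mul_pow]
  field_simp
  ring

lemma base_integrable (k : ℕ) :
    IntegrableOn (fun t : ℝ => t ^ (2 * k + 1) * Real.exp (-t ^ 2 / 2)) (Ioi 0) := by
  have h := integrableOn_rpow_mul_exp_neg_mul_rpow (p := 2) (s := (2 * k + 1 : ℕ)) (b := 1/2)
    (by push_cast; linarith [Nat.cast_nonneg (α := ℝ) k]) (by norm_num) (by norm_num)
  refine h.congr_fun (fun t ht => ?_) measurableSet_Ioi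
  have e1 : t ^ ((2 * k + 1 : ℕ) : ℝ) = t ^ (2 * k + 1) := Real.rpow_natCast t _
  have e2 : t ^ (2 : ℝ) = t ^ (2 : ℕ) := by
    rw [show (2:ℝ) = ((2:ℕ):ℝ) by norm_num, Real.rpow_natCast]
  simp only [e1, e2]
  congr 1
  ring

lemma mgTerm_integrable (a : ℝ) (k : ℕ) : IntegrableOn (mgTerm a k) (Ioi 0) := by
  exact (base_integrable k).const_mul _

lemma mgTerm_integral (a : ℝ) (k : ℕ) :
    ∫ t in Ioi (0:ℝ), mgTerm a k t
      = Real.exp (-a ^ 2 / 2) * ((a ^ 2 / 2) ^ k / (Nat.factorial k : ℝ)) := by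
  unfold mgTerm
  rw [integral_const_mul, gauss_moment k]
  have hf : ((Nat.factorial k : ℝ)) ≠ 0 := by exact_mod_cast Nat.factorial_ne_zero k
  rw [div_pow]
  field_simp
  ring

lemma mgTerm_nonneg (a : ℝ) (k : ℕ) {t : ℝ} (ht : 0 ≤ t) (ha : 0 ≤ a) : 0 ≤ mgTerm a k t := by
  unfold mgTerm; positivity

lemma mg_total_integral {a : ℝ} (ha : 0 ≤ a) : ∫ t in Ioi (0:ℝ), mg a t = 1 := by
  have hsum : Summable (fun k : ℕ =>
      Real.exp (-a ^ 2 / 2) * ((a ^ 2 / 2) ^ k / (Nat.factorial k : ℝ))) :=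
    (Real.summable_pow_div_factorial (a ^ 2 / 2)).mul_left _
  have hnorm : ∀ k : ℕ, (∫ t in Ioi (0:ℝ), ‖mgTerm a k t‖)
      = Real.exp (-a ^ 2 / 2) * ((a ^ 2 / 2) ^ k / (Nat.factorial k : ℝ)) := by
    intro k
    rw [← mgTerm_integral a k]
    refine setIntegral_congr_fun measurableSet_Ioi (fun t ht => ?_)
    exact Real.norm_of_nonneg (mgTerm_nonneg a k (le_of_lt ht) ha)
  have hswap := integral_tsum_of_summable_integral_norm
    (F := fun k => mgTerm a k) (μ := volume.restrict (Ioi 0))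
    (fun k => mgTerm_integrable a k) (by rw [funext hnorm]; exact hsum)
  have heq : ∀ t ∈ Ioi (0:ℝ), (∑' k, mgTerm a k t) = mg a t := by
    intro t ht
    simp only [mgTerm_eq]
    rw [tsum_mul_left]
    rfl
  calc ∫ t in Ioi (0:ℝ), mg a t = ∫ t in Ioi (0:ℝ), ∑' k, mgTerm a k t := by
        refine setIntegral_congr_fun measurableSet_Ioi (fun t ht => (heq t ht).symm)
    _ = ∑' k, ∫ t in Ioi (0:ℝ), mgTerm a k t := hswap.symm
    _ = Real.exp (-a ^ 2 / 2) * ∑' k, ((a ^ 2 / 2) ^ k / (Nat.factorial k : ℝ)) := by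
        simp only [mgTerm_integral a]; rw [tsum_mul_left]
    _ = Real.exp (-a ^ 2 / 2) * Real.exp (a ^ 2 / 2) := by
        rw [← real_exp_eq_tsum]
    _ = 1 := by rw [← Real.exp_add]; ring_nf; exact Real.exp_zero

end MarcumAux

section Main
open Set

theorem inverse_marcumQ_exists_unique (a ε : ℝ) (ha : 0 ≤ a) (hε : ε ∈ Set.Ioo (0:ℝ) 1) :
    ∃! b : ℝ, 0 < b ∧ marcumQ a b = 1 - ε := by
  obtain ⟨hε0, hε1⟩ := hε
  set F : ℝ → ℝ := fun b => ∫ t in (0:ℝ)..b, mg a t with hF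
  have hii : ∀ c d : ℝ, IntervalIntegrable (mg a) volume c d :=
    fun c d => (mg_continuous a).intervalIntegrable c d
  have hFcont : Continuous F := intervalIntegral.continuous_primitive hii 0
  have hFtend : Tendsto F atTop (nhds 1) := by
    have := intervalIntegral_tendsto_integral_Ioi 0 (mg_integrableOn ha) tendsto_id
    rwa [mg_total_integral ha] at this
  have hF0 : F 0 = 0 := intervalIntegral.integral_same
  have hFmono : StrictMonoOn F (Ici 0) := by
    intro x hx y hy hxy
    have : F y = F x + ∫ t in x..y, mg a t :=
      (intervalIntegral.integral_add_adjacent_intervals (hii 0 x) (hii x y)).symm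
    rw [this]
    have hpos : 0 < ∫ t in x..y, mg a t :=
      intervalIntegral.intervalIntegral_pos_of_pos_on (hii x y)
        (fun t ht => mg_pos a (lt_of_le_of_lt hx ht.1)) hxy
    linarith
  have hmarcum : ∀ b : ℝ, 0 ≤ b → marcumQ a b = 1 - F b := by
    intro b hb
    have hsplit : ∫ t in Ioi (0:ℝ), mg a t
        = (∫ t in Ioc (0:ℝ) b, mg a t) + ∫ t in Ioi b, mg a t := by
      rw [← setIntegral_union (Ioc_disjoint_Ioi le_rfl) measurableSet_Ioi
        ((mg_integrableOn ha).mono_set (fun t ht => ht.1 : Ioc 0 b ⊆ Ioi 0))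
        ((mg_integrableOn ha).mono_set (fun t ht => lt_of_le_of_lt hb ht : Ioi b ⊆ Ioi 0)),
        Ioc_union_Ioi_eq_Ioi hb]
    have hFb : F b = ∫ t in Ioc (0:ℝ) b, mg a t := intervalIntegral.integral_of_le hb
    have hM : marcumQ a b = ∫ t in Ioi b, mg a t := rfl
    rw [mg_total_integral ha] at hsplit
    rw [hM, hFb]
    linarith
  -- existence
  have hev : ∀ᶠ B in atTop, ε < F B := hFtend.eventually (eventually_gt_nhds hε1)
  obtain ⟨B, hB1, hB0⟩ := (hev.and (eventually_ge_atTop (0:ℝ))).exists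
  have hIVT : ε ∈ F '' Icc 0 B := by
    apply intermediate_value_Icc hB0 hFcont.continuousOn
    exact ⟨by rw [hF0]; exact hε0.le, hB1.le⟩
  obtain ⟨b, hbmem, hbε⟩ := hIVT
  have hb0 : 0 < b := by
    rcases eq_or_lt_of_le hbmem.1 with h | h
    · exfalso; rw [← h, hF0] at hbε; linarith
    · exact h
  refine ⟨b, ⟨hb0, by rw [hmarcum b hb0.le, hbε]⟩, ?_⟩
  rintro b' ⟨hb'0, hb'⟩
  have : F b' = ε := by
    have := hmarcum b' hb'0.le
    rw [hb'] at this
    linarith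
  exact hFmono.injOn hb'0.le hb0.le (by rw [this, hbε])

end Main
end

section
/- For every fixed b ≥ 0 and every a > 0, the map x ↦ Q(x,b) is differentiable at a with derivative ∂Q(a,b)/∂a = b·exp(−(a²+b²)/2)·I_1(a·b). -/
open Real MeasureTheory Filter

lemma fact_sq (k : ℕ) : Nat.factorial (2*k) ≤ 4^k * (Nat.factorial k)^2 := by
  induction k with
  | zero => simp
  | succ n ih =>
    calc Nat.factorial (2*(n+1)) = (2*n+2) * ((2*n+1) * Nat.factorial (2*n)) := by
          rw [show 2*(n+1) = (2*n+1)+1 by ring, Nat.factorial_succ, Nat.factorial_succ]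
      _ ≤ (2*n+2) * ((2*n+2) * (4^n * (Nat.factorial n)^2)) := by
          exact Nat.mul_le_mul_left _ (Nat.mul_le_mul (by omega) ih)
      _ = 4^(n+1) * ((n+1) * Nat.factorial n)^2 := by ring
      _ = 4^(n+1) * (Nat.factorial (n+1))^2 := by rw [Nat.factorial_succ]

lemma fact_odd (k : ℕ) :
    Nat.factorial (2*k+1) ≤ 2 * 4^k * (Nat.factorial k * Nat.factorial (k+1)) := by
  calc Nat.factorial (2*k+1) = (2*k+1) * Nat.factorial (2*k) := Nat.factorial_succ _
    _ ≤ (2*k+2) * (4^k * (Nat.factorial k)^2) := Nat.mul_le_mul (by omega) (fact_sq k)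
    _ = 2 * 4^k * (Nat.factorial k * ((k+1) * Nat.factorial k)) := by ring
    _ = 2 * 4^k * (Nat.factorial k * Nat.factorial (k+1)) := by rw [Nat.factorial_succ]

lemma fact_pos_real (k : ℕ) : (0:ℝ) < (Nat.factorial k : ℝ) :=
  Nat.cast_pos.2 k.factorial_pos

lemma one_le_fact_real (k : ℕ) : (1:ℝ) ≤ (Nat.factorial k : ℝ) :=
  Nat.one_le_cast.2 k.factorial_pos

lemma summable_I0 (z : ℝ) :
    Summable (fun k : ℕ => (z/2)^(2*k) / ((Nat.factorial k : ℝ))^2) := by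
  refine Summable.of_nonneg_of_le (fun k => ?_) (fun k => ?_)
    (Real.summable_pow_div_factorial ((z/2)^2))
  · rw [pow_mul]; positivity
  · rw [pow_mul]
    apply div_le_div_of_nonneg_left (by positivity) (fact_pos_real k)
    exact le_self_pow₀ (one_le_fact_real k) two_ne_zero

lemma summable_I1 (z : ℝ) :
    Summable (fun k : ℕ =>
      (z/2)^(2*k+1) / ((Nat.factorial k : ℝ) * (Nat.factorial (k+1) : ℝ))) := by
  apply Summable.of_abs
  refine Summable.of_nonneg_of_le (fun k => abs_nonneg _) (fun k => ?_)
    (((Real.summable_pow_div_factorial ((|z|/2)^2)).mul_left (|z|/2)))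
  rw [abs_div, abs_pow, abs_of_pos (by positivity : (0:ℝ) < (Nat.factorial k : ℝ) * (Nat.factorial (k+1) : ℝ)), abs_div, abs_two]
  calc (|z|/2)^(2*k+1) / ((Nat.factorial k : ℝ) * (Nat.factorial (k+1) : ℝ))
      ≤ (|z|/2)^(2*k+1) / (Nat.factorial k : ℝ) := by
        apply div_le_div_of_nonneg_left (by positivity) (fact_pos_real k)
        nth_rewrite 1 [← mul_one ((Nat.factorial k : ℝ))]
        exact mul_le_mul_of_nonneg_left (one_le_fact_real (k+1)) (fact_pos_real k).le
    _ = |z|/2 * (((|z|/2)^2)^k / (Nat.factorial k : ℝ)) := by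
        rw [pow_succ, ← pow_mul, mul_comm ((|z|/2)^(2*k)) _, mul_div_assoc, mul_comm 2 k]


/-- terms of besselI0 -/
noncomputable def bI0t (k : ℕ) (y : ℝ) : ℝ := (y/2)^(2*k) / ((Nat.factorial k : ℝ))^2
/-- derivative of terms of besselI0 -/
noncomputable def bI0t' (k : ℕ) (y : ℝ) : ℝ :=
  (k : ℝ) * (y/2)^(2*k-1) / ((Nat.factorial k : ℝ))^2

lemma bI0t_hasDeriv (k : ℕ) (y : ℝ) : HasDerivAt (bI0t k) (bI0t' k y) y := by
  have h1 : HasDerivAt (fun y : ℝ => y/2) (1/2) y := (hasDerivAt_id y).div_const 2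
  have h2 := ((hasDerivAt_pow (2*k) (y/2)).comp y h1).div_const (((Nat.factorial k : ℝ))^2)
  have : bI0t' k y = ((2*k : ℕ) : ℝ) * (y/2)^(2*k-1) * (1/2) / ((Nat.factorial k : ℝ))^2 := by
    unfold bI0t'; push_cast; ring
  rw [this]
  exact h2

lemma bI0t'_bound {R : ℝ} (hR1 : (1:ℝ) ≤ R) (k : ℕ) (y : ℝ) (hy : |y| < R) :
    ‖bI0t' k y‖ ≤ 2 * (((R/2)^2)^k / (Nat.factorial k : ℝ)) := by
  have hR0 : (0:ℝ) < R := lt_of_lt_of_le one_pos hR1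
  have hy2 : |y/2| ≤ R/2 := by rw [abs_div, abs_two]; linarith
  rw [Real.norm_eq_abs, bI0t', abs_div, abs_mul, abs_pow,
    abs_of_nonneg (Nat.cast_nonneg k),
    abs_of_pos (by positivity : (0:ℝ) < ((Nat.factorial k:ℝ))^2)]
  have key : (k:ℝ) * |y/2|^(2*k-1) ≤ (Nat.factorial k : ℝ) * (2 * ((R/2)^2)^k) := by
    rcases Nat.eq_zero_or_pos k with rfl | hk
    · simp
    · have h1 : |y/2|^(2*k-1) ≤ (R/2)^(2*k-1) := pow_le_pow_left₀ (abs_nonneg _) hy2 _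
      have h2 : (R/2)^(2*k-1) ≤ 2 * ((R/2)^2)^k := by
        have he : ((R/2)^2)^k = (R/2)^(2*k-1) * (R/2) := by
          rw [← pow_mul, ← pow_succ]
          congr 1
          omega
        rw [he]
        calc (R/2)^(2*k-1) = (R/2)^(2*k-1) * 1 := by ring
          _ ≤ (R/2)^(2*k-1) * R := mul_le_mul_of_nonneg_left hR1 (by positivity)
          _ = 2 * ((R/2)^(2*k-1) * (R/2)) := by ring
      exact mul_le_mul (Nat.cast_le.2 (Nat.self_le_factorial k)) (h1.trans h2)
        (by positivity) (fact_pos_real k).le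
  calc (k:ℝ) * |y/2|^(2*k-1) / ((Nat.factorial k:ℝ))^2
      ≤ (Nat.factorial k : ℝ) * (2 * ((R/2)^2)^k) / ((Nat.factorial k:ℝ))^2 :=
        (div_le_div_iff_of_pos_right (by positivity)).2 key
    _ = 2 * (((R/2)^2)^k / (Nat.factorial k : ℝ)) := by
        have hne : (Nat.factorial k : ℝ) ≠ 0 := (fact_pos_real k).ne'
        field_simp

lemma hasDerivAt_besselI0 (z : ℝ) : HasDerivAt besselI0 (besselI1 z) z := by
  have hR1 : (1:ℝ) ≤ |z| + 1 := le_add_of_nonneg_left (abs_nonneg z)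
  have hu_sum : Summable (fun k : ℕ => 2 * ((((|z|+1)/2)^2)^k / (Nat.factorial k : ℝ))) :=
    (Real.summable_pow_div_factorial (((|z|+1)/2)^2)).mul_left 2
  have hz : z ∈ Metric.ball (0:ℝ) (|z|+1) := by
    simp [Real.dist_eq]
  have hmem : ∀ y : ℝ, y ∈ Metric.ball (0:ℝ) (|z|+1) → |y| < |z| + 1 := by
    intro y hy; simpa [Real.dist_eq] using hy
  have H := hasDerivAt_tsum_of_isPreconnected hu_sum Metric.isOpen_ball
    (convex_ball (0:ℝ) (|z|+1)).isPreconnected (fun k y _ => bI0t_hasDeriv k y)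
    (fun k y hy => bI0t'_bound hR1 k y (hmem y hy)) hz (summable_I0 z) hz
  have hsum' : Summable (fun k => bI0t' k z) :=
    Summable.of_norm (Summable.of_nonneg_of_le (fun k => norm_nonneg _)
      (fun k => bI0t'_bound hR1 k z (hmem z hz)) hu_sum)
  have htsum : ∑' k, bI0t' k z = besselI1 z := by
    rw [Summable.tsum_eq_zero_add hsum']
    have h0 : bI0t' 0 z = 0 := by simp [bI0t']
    rw [h0, zero_add, besselI1]
    refine tsum_congr fun j => ?_
    rw [bI0t', show 2*(j+1)-1 = 2*j+1 by omega, Nat.factorial_succ]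
    have hne : (Nat.factorial j : ℝ) ≠ 0 := (fact_pos_real j).ne'
    push_cast
    field_simp
  rw [← htsum]
  exact H

/-- terms of y * besselI1 y -/
noncomputable def bHt (k : ℕ) (y : ℝ) : ℝ :=
  2 * ((y/2)^(2*k+2) / ((Nat.factorial k : ℝ) * (Nat.factorial (k+1) : ℝ)))
noncomputable def bHt' (k : ℕ) (y : ℝ) : ℝ :=
  (2*(k:ℝ)+2) * (y/2)^(2*k+1) / ((Nat.factorial k : ℝ) * (Nat.factorial (k+1) : ℝ))

lemma bHt_hasDeriv (k : ℕ) (y : ℝ) : HasDerivAt (bHt k) (bHt' k y) y := by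
  have h1 : HasDerivAt (fun y : ℝ => y/2) (1/2) y := (hasDerivAt_id y).div_const 2
  have h2 := (((hasDerivAt_pow (2*k+2) (y/2)).comp y h1).div_const
    ((Nat.factorial k : ℝ) * (Nat.factorial (k+1) : ℝ))).const_mul 2
  have : bHt' k y = 2 * ((((2*k+2 : ℕ)) : ℝ) * (y/2)^(2*k+2-1) * (1/2) /
      ((Nat.factorial k : ℝ) * (Nat.factorial (k+1) : ℝ))) := by
    rw [bHt', show 2*k+2-1 = 2*k+1 by omega]
    push_cast
    ring
  rw [this]
  exact h2

lemma bHt'_bound {R : ℝ} (hR1 : (1:ℝ) ≤ R) (k : ℕ) (y : ℝ) (hy : |y| < R) :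
    ‖bHt' k y‖ ≤ R * (((R/2)^2)^k / (Nat.factorial k : ℝ)) := by
  have hR0 : (0:ℝ) < R := lt_of_lt_of_le one_pos hR1
  have hy2 : |y/2| ≤ R/2 := by rw [abs_div, abs_two]; linarith
  have hfk : (0:ℝ) < (Nat.factorial k : ℝ) := fact_pos_real k
  have hfk1 : (0:ℝ) < (Nat.factorial (k+1) : ℝ) := fact_pos_real (k+1)
  rw [Real.norm_eq_abs, bHt', abs_div, abs_mul, abs_pow,
    abs_of_nonneg (by positivity : (0:ℝ) ≤ 2*(k:ℝ)+2),
    abs_of_pos (by positivity : (0:ℝ) < (Nat.factorial k : ℝ) * (Nat.factorial (k+1) : ℝ))]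
  calc (2*(k:ℝ)+2) * |y/2|^(2*k+1) / ((Nat.factorial k : ℝ) * (Nat.factorial (k+1) : ℝ))
      ≤ (2*(k:ℝ)+2) * (R/2)^(2*k+1) / ((Nat.factorial k : ℝ) * (Nat.factorial (k+1) : ℝ)) := by
        apply (div_le_div_iff_of_pos_right (by positivity)).2
        exact mul_le_mul_of_nonneg_left (pow_le_pow_left₀ (abs_nonneg _) hy2 _) (by positivity)
    _ = R * (((R/2)^2)^k / ((Nat.factorial k : ℝ) * (Nat.factorial k : ℝ))) := by
        rw [Nat.factorial_succ]
        push_cast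
        rw [pow_succ, ← pow_mul]
        have h1 : (Nat.factorial k : ℝ) ≠ 0 := hfk.ne'
        field_simp
    _ ≤ R * (((R/2)^2)^k / (Nat.factorial k : ℝ)) := by
        apply mul_le_mul_of_nonneg_left _ (by positivity)
        apply div_le_div_of_nonneg_left (by positivity) hfk
        nth_rewrite 1 [← mul_one ((Nat.factorial k : ℝ))]
        exact mul_le_mul_of_nonneg_left (one_le_fact_real k) hfk.le

lemma hasDerivAt_mul_besselI1 (z : ℝ) :
    HasDerivAt (fun y => y * besselI1 y) (z * besselI0 z) z := by
  have hR1 : (1:ℝ) ≤ |z| + 1 := le_add_of_nonneg_left (abs_nonneg z)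
  have hu_sum : Summable (fun k : ℕ =>
      (|z|+1) * ((((|z|+1)/2)^2)^k / (Nat.factorial k : ℝ))) :=
    (Real.summable_pow_div_factorial (((|z|+1)/2)^2)).mul_left _
  have hz : z ∈ Metric.ball (0:ℝ) (|z|+1) := by simp [Real.dist_eq]
  have hmem : ∀ y : ℝ, y ∈ Metric.ball (0:ℝ) (|z|+1) → |y| < |z| + 1 := by
    intro y hy; simpa [Real.dist_eq] using hy
  have hfun : (fun y : ℝ => y * besselI1 y) = (fun y : ℝ => ∑' k, bHt k y) := by
    funext y
    rw [besselI1, ← tsum_mul_left]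
    refine tsum_congr fun k => ?_
    rw [bHt, pow_succ]
    ring
  have hEterm : ∀ k, bHt k z = z * ((z/2)^(2*k+1) /
      ((Nat.factorial k : ℝ) * (Nat.factorial (k+1) : ℝ))) := by
    intro k
    rw [bHt, pow_succ]
    ring
  have hsum0 : Summable (fun k => bHt k z) :=
    ((summable_I1 z).mul_left z).congr (fun k => (hEterm k).symm)
  have H := hasDerivAt_tsum_of_isPreconnected hu_sum Metric.isOpen_ball
    (convex_ball (0:ℝ) (|z|+1)).isPreconnected (fun k y _ => bHt_hasDeriv k y)
    (fun k y hy => bHt'_bound hR1 k y (hmem y hy)) hz hsum0 hz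
  have htsum : ∑' k, bHt' k z = z * besselI0 z := by
    rw [besselI0, ← tsum_mul_left]
    refine tsum_congr fun k => ?_
    rw [bHt', Nat.factorial_succ]
    have h1 : (Nat.factorial k : ℝ) ≠ 0 := (fact_pos_real k).ne'
    push_cast
    rw [pow_succ]
    field_simp
  rw [hfun, ← htsum]
  exact H


lemma term_le_I0 (z : ℝ) (k : ℕ) :
    |(z/2)^(2*k) / ((Nat.factorial k : ℝ))^2| ≤ |z|^(2*k) / ((Nat.factorial (2*k) : ℝ)) := by
  rw [abs_div, abs_pow, abs_of_pos (by positivity : (0:ℝ) < ((Nat.factorial k : ℝ))^2)]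
  rw [div_le_div_iff₀ (by positivity) (fact_pos_real (2*k))]
  have hcast : ((Nat.factorial (2*k) : ℝ)) ≤ 4^k * ((Nat.factorial k : ℝ))^2 := by
    exact_mod_cast Nat.cast_le.2 (fact_sq k)
  calc |z/2|^(2*k) * (Nat.factorial (2*k) : ℝ)
      ≤ |z/2|^(2*k) * (4^k * ((Nat.factorial k : ℝ))^2) :=
        mul_le_mul_of_nonneg_left hcast (by positivity)
    _ = |z|^(2*k) * ((Nat.factorial k : ℝ))^2 := by
        rw [abs_div, abs_two, div_pow, pow_mul, pow_mul, show ((2:ℝ))^2 = 4 by norm_num]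
        field_simp

lemma summable_even (x : ℝ) (hx : 0 ≤ x) :
    Summable (fun k : ℕ => x^(2*k) / ((Nat.factorial (2*k) : ℝ))) := by
  refine Summable.of_nonneg_of_le (fun k => by positivity) (fun k => ?_)
    (Real.summable_pow_div_factorial (x^2))
  rw [pow_mul]
  apply div_le_div_of_nonneg_left (by positivity) (fact_pos_real k)
  exact_mod_cast Nat.cast_le.2 (Nat.factorial_le (by omega))

lemma tsum_even_le_exp (x : ℝ) (hx : 0 ≤ x) :
    ∑' k : ℕ, x^(2*k) / ((Nat.factorial (2*k) : ℝ)) ≤ Real.exp x := by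
  have hexp : Real.exp x = ∑' n : ℕ, x^n / (Nat.factorial n : ℝ) := by
    rw [Real.exp_eq_exp_ℝ, NormedSpace.exp_eq_tsum_div]
  rw [hexp]
  exact Summable.tsum_le_tsum_of_inj (fun k => 2*k) (fun a b h => by simpa using h)
    (fun c _ => by positivity) (fun k => le_rfl) (summable_even x hx)
    (Real.summable_pow_div_factorial x)

lemma abs_besselI0_le (z : ℝ) : |besselI0 z| ≤ Real.exp |z| := by
  have hs : Summable (fun k : ℕ => |(z/2)^(2*k) / ((Nat.factorial k : ℝ))^2|) :=
    Summable.of_nonneg_of_le (fun k => abs_nonneg _) (term_le_I0 z)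
      (summable_even |z| (abs_nonneg z))
  calc |besselI0 z| ≤ ∑' k : ℕ, |(z/2)^(2*k) / ((Nat.factorial k : ℝ))^2| := by
        rw [besselI0, ← Real.norm_eq_abs]
        have hs' : Summable (fun k : ℕ => ‖(z/2)^(2*k) / ((Nat.factorial k : ℝ))^2‖) := hs
        simpa only [Real.norm_eq_abs] using norm_tsum_le_tsum_norm hs'
    _ ≤ ∑' k : ℕ, |z|^(2*k) / ((Nat.factorial (2*k) : ℝ)) :=
        Summable.tsum_le_tsum (term_le_I0 z) hs (summable_even |z| (abs_nonneg z))
    _ ≤ Real.exp |z| := tsum_even_le_exp |z| (abs_nonneg z)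

lemma term_le_I1 (z : ℝ) (k : ℕ) :
    |(z/2)^(2*k+1) / ((Nat.factorial k : ℝ) * (Nat.factorial (k+1) : ℝ))|
      ≤ |z|^(2*k+1) / ((Nat.factorial (2*k+1) : ℝ)) := by
  rw [abs_div, abs_pow,
    abs_of_pos (by positivity : (0:ℝ) < (Nat.factorial k : ℝ) * (Nat.factorial (k+1) : ℝ))]
  rw [div_le_div_iff₀ (by positivity) (fact_pos_real (2*k+1))]
  have hcast : ((Nat.factorial (2*k+1) : ℝ))
      ≤ 2 * 4^k * ((Nat.factorial k : ℝ) * (Nat.factorial (k+1) : ℝ)) := by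
    exact_mod_cast Nat.cast_le.2 (fact_odd k)
  calc |z/2|^(2*k+1) * (Nat.factorial (2*k+1) : ℝ)
      ≤ |z/2|^(2*k+1) * (2 * 4^k * ((Nat.factorial k : ℝ) * (Nat.factorial (k+1) : ℝ))) :=
        mul_le_mul_of_nonneg_left hcast (by positivity)
    _ = |z|^(2*k+1) * ((Nat.factorial k : ℝ) * (Nat.factorial (k+1) : ℝ)) := by
        rw [abs_div, abs_two, div_pow]
        rw [show (2:ℝ)^(2*k+1) = 2 * 4^k by rw [pow_succ, pow_mul]; norm_num; ring]
        field_simp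

lemma summable_odd (x : ℝ) (hx : 0 ≤ x) :
    Summable (fun k : ℕ => x^(2*k+1) / ((Nat.factorial (2*k+1) : ℝ))) := by
  refine Summable.of_nonneg_of_le (fun k => by positivity) (fun k => ?_)
    ((Real.summable_pow_div_factorial (x^2)).mul_left x)
  rw [pow_succ, pow_mul]
  rw [mul_comm ((x^2)^k) x, mul_div_assoc]
  apply mul_le_mul_of_nonneg_left _ hx
  apply div_le_div_of_nonneg_left (by positivity) (fact_pos_real k)
  exact_mod_cast Nat.cast_le.2 (Nat.factorial_le (by omega))

lemma tsum_odd_le_exp (x : ℝ) (hx : 0 ≤ x) :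
    ∑' k : ℕ, x^(2*k+1) / ((Nat.factorial (2*k+1) : ℝ)) ≤ Real.exp x := by
  have hexp : Real.exp x = ∑' n : ℕ, x^n / (Nat.factorial n : ℝ) := by
    rw [Real.exp_eq_exp_ℝ, NormedSpace.exp_eq_tsum_div]
  rw [hexp]
  exact Summable.tsum_le_tsum_of_inj (fun k => 2*k+1) (fun a b h => by simpa using h)
    (fun c _ => by positivity) (fun k => le_rfl) (summable_odd x hx)
    (Real.summable_pow_div_factorial x)

lemma abs_besselI1_le (z : ℝ) : |besselI1 z| ≤ Real.exp |z| := by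
  have hs : Summable (fun k : ℕ =>
      |(z/2)^(2*k+1) / ((Nat.factorial k : ℝ) * (Nat.factorial (k+1) : ℝ))|) :=
    Summable.of_nonneg_of_le (fun k => abs_nonneg _) (term_le_I1 z)
      (summable_odd |z| (abs_nonneg z))
  calc |besselI1 z| ≤ ∑' k : ℕ,
        |(z/2)^(2*k+1) / ((Nat.factorial k : ℝ) * (Nat.factorial (k+1) : ℝ))| := by
        rw [besselI1, ← Real.norm_eq_abs]
        have hs' : Summable (fun k : ℕ =>
          ‖(z/2)^(2*k+1) / ((Nat.factorial k : ℝ) * (Nat.factorial (k+1) : ℝ))‖) := hs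
        simpa only [Real.norm_eq_abs] using norm_tsum_le_tsum_norm hs'
    _ ≤ ∑' k : ℕ, |z|^(2*k+1) / ((Nat.factorial (2*k+1) : ℝ)) :=
        Summable.tsum_le_tsum (term_le_I1 z) hs (summable_odd |z| (abs_nonneg z))
    _ ≤ Real.exp |z| := tsum_odd_le_exp |z| (abs_nonneg z)


lemma tendsto_poly_gauss (n : ℕ) (c : ℝ) :
    Tendsto (fun t : ℝ => t^n * Real.exp (c*t - t^2/2)) atTop (nhds 0) := by
  apply squeeze_zero_norm' ?_ (tendsto_pow_mul_exp_neg_atTop_nhds_zero n)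
  filter_upwards [eventually_ge_atTop (max 0 (2*(c+1)))] with t ht
  have ht0 : (0:ℝ) ≤ t := le_trans (le_max_left _ _) ht
  have htc : 2*(c+1) ≤ t := le_trans (le_max_right _ _) ht
  rw [Real.norm_eq_abs, abs_mul, abs_pow, abs_of_nonneg ht0,
    abs_of_pos (Real.exp_pos _)]
  apply mul_le_mul_of_nonneg_left _ (pow_nonneg ht0 n)
  apply Real.exp_le_exp.2
  nlinarith [mul_nonneg ht0 (sub_nonneg.2 htc)]

lemma integrable_poly_gauss (n : ℕ) (c b : ℝ) :
    IntegrableOn (fun t : ℝ => t^n * Real.exp (c*t - t^2/2)) (Set.Ioi b) := by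
  apply integrable_of_isBigO_exp_neg one_pos
    ((Continuous.continuousOn (by fun_prop)))
  rw [Asymptotics.isBigO_iff]
  refine ⟨1, ?_⟩
  have hev := (tendsto_poly_gauss n (c+1)).eventually_le_const one_pos
  filter_upwards [hev, eventually_ge_atTop 0] with t h1 ht0
  rw [Real.norm_eq_abs, Real.norm_eq_abs, abs_mul, abs_pow, abs_of_nonneg ht0,
    abs_of_pos (Real.exp_pos _), abs_of_pos (Real.exp_pos _), one_mul]
  have he : Real.exp (c*t - t^2/2) = Real.exp ((c+1)*t - t^2/2) * Real.exp (-1*t) := by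
    rw [← Real.exp_add]
    ring_nf
  rw [he, ← mul_assoc]
  calc t^n * Real.exp ((c+1)*t - t^2/2) * Real.exp (-1*t)
      ≤ 1 * Real.exp (-1*t) := mul_le_mul_of_nonneg_right h1 (Real.exp_pos _).le
    _ = Real.exp (-1*t) := one_mul _


theorem marcumQ_hasDerivAt_first_arg (a b : ℝ) (hb : 0 ≤ b) (ha : 0 < a) :
    HasDerivAt (fun x => marcumQ x b)
      (b * Real.exp (-(a ^ 2 + b ^ 2) / 2) * besselI1 (a * b)) a := by
  have hane : a ≠ 0 := ha.ne'
  have cI0 : Continuous besselI0 :=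
    continuous_iff_continuousAt.2 fun z => (hasDerivAt_besselI0 z).continuousAt
  have cH : Continuous (fun y : ℝ => y * besselI1 y) :=
    continuous_iff_continuousAt.2 fun z => (hasDerivAt_mul_besselI1 z).continuousAt
  -- continuity of x ↦ F x, for each x
  have cF : ∀ x : ℝ, Continuous (fun t : ℝ =>
      t * Real.exp (-(t^2 + x^2)/2) * besselI0 (x*t)) := by
    intro x
    apply Continuous.mul
    · exact continuous_id.mul (by fun_prop)
    · exact cI0.comp (by fun_prop)
  have key := hasDerivAt_integral_of_dominated_loc_of_deriv_le
      (μ := volume.restrict (Set.Ioi b))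
      (F := fun (x : ℝ) (t : ℝ) => t * Real.exp (-(t^2 + x^2)/2) * besselI0 (x*t))
      (F' := fun (x : ℝ) (t : ℝ) => t * Real.exp (-(t^2 + x^2)/2) *
        (t * besselI1 (x*t) - x * besselI0 (x*t)))
      (x₀ := a) (s := Metric.ball a 1)
      (bound := fun t => t * Real.exp (-(t^2)/2) * ((t + (a+1)) * Real.exp ((a+1)*t)))
      (Metric.ball_mem_nhds a one_pos)
      (Eventually.of_forall fun x => (cF x).aestronglyMeasurable)
      ?hFint ?hF'meas ?hbdd ?bint ?hdiff
  case hFint =>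
    apply Integrable.mono' ((integrable_poly_gauss 1 a b))
      (cF a).aestronglyMeasurable
    rw [ae_restrict_iff' measurableSet_Ioi]
    apply ae_of_all
    intro t ht
    have ht0 : (0:ℝ) ≤ t := hb.trans (le_of_lt ht)
    have hI0 : |besselI0 (a*t)| ≤ Real.exp (a*t) := by
      refine (abs_besselI0_le _).trans ?_
      rw [abs_of_nonneg (mul_nonneg ha.le ht0)]
    rw [Real.norm_eq_abs, abs_mul, abs_mul, abs_of_nonneg ht0,
      abs_of_pos (Real.exp_pos _)]
    calc t * Real.exp (-(t^2 + a^2)/2) * |besselI0 (a*t)|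
        ≤ t * Real.exp (-(t^2)/2) * Real.exp (a*t) := by
          have he : Real.exp (-(t^2 + a^2)/2) ≤ Real.exp (-(t^2)/2) :=
            Real.exp_le_exp.2 (by nlinarith [sq_nonneg a])
          exact mul_le_mul (mul_le_mul_of_nonneg_left he ht0) hI0
            (abs_nonneg _) (by positivity)
      _ = t^1 * Real.exp (a*t - t^2/2) := by
          rw [show a*t - t^2/2 = -(t^2)/2 + a*t by ring, Real.exp_add]
          ring
  case hF'meas =>
    have hfeq : (fun t : ℝ => t * Real.exp (-(t^2 + a^2)/2) *
        (t * besselI1 (a*t) - a * besselI0 (a*t)))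
        = (fun t : ℝ => t * Real.exp (-(t^2 + a^2)/2) *
        ((a*t) * besselI1 (a*t) / a - a * besselI0 (a*t))) := by
      funext t
      congr 1
      congr 1
      field_simp
    show AEStronglyMeasurable (fun t : ℝ => t * Real.exp (-(t^2 + a^2)/2) *
        (t * besselI1 (a*t) - a * besselI0 (a*t))) _
    rw [hfeq]
    apply Continuous.aestronglyMeasurable
    apply Continuous.mul
    · exact continuous_id.mul (by fun_prop)
    · apply Continuous.sub
      · exact (cH.comp (by fun_prop : Continuous fun t : ℝ => a*t)).div_const a
      · exact continuous_const.mul (cI0.comp (by fun_prop : Continuous fun t : ℝ => a*t))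
  case hbdd =>
    rw [ae_restrict_iff' measurableSet_Ioi]
    apply ae_of_all
    intro t ht x hx
    have ht0 : (0:ℝ) ≤ t := hb.trans (le_of_lt ht)
    have hxa : |x| ≤ a + 1 := by
      have h1 : |x| - |a| ≤ |x - a| := abs_sub_abs_le_abs_sub x a
      have h2 : |x - a| < 1 := by simpa [Real.dist_eq] using hx
      rw [abs_of_pos ha] at h1
      linarith
    have hxt : |x*t| ≤ (a+1)*t := by
      rw [abs_mul, abs_of_nonneg ht0]
      exact mul_le_mul_of_nonneg_right hxa ht0
    have hI0 : |besselI0 (x*t)| ≤ Real.exp ((a+1)*t) :=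
      (abs_besselI0_le _).trans (Real.exp_le_exp.2 hxt)
    have hI1 : |besselI1 (x*t)| ≤ Real.exp ((a+1)*t) :=
      (abs_besselI1_le _).trans (Real.exp_le_exp.2 hxt)
    have h3 : |t * besselI1 (x*t) - x * besselI0 (x*t)|
        ≤ (t + (a+1)) * Real.exp ((a+1)*t) := by
      calc |t * besselI1 (x*t) - x * besselI0 (x*t)|
          ≤ |t * besselI1 (x*t)| + |x * besselI0 (x*t)| := abs_sub _ _
        _ ≤ t * Real.exp ((a+1)*t) + (a+1) * Real.exp ((a+1)*t) := by
            apply add_le_add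
            · rw [abs_mul, abs_of_nonneg ht0]
              exact mul_le_mul_of_nonneg_left hI1 ht0
            · rw [abs_mul]
              exact mul_le_mul hxa hI0 (abs_nonneg _) (by linarith)
        _ = (t + (a+1)) * Real.exp ((a+1)*t) := by ring
    rw [Real.norm_eq_abs, abs_mul, abs_mul, abs_of_nonneg ht0,
      abs_of_pos (Real.exp_pos _)]
    have he : Real.exp (-(t^2 + x^2)/2) ≤ Real.exp (-(t^2)/2) :=
      Real.exp_le_exp.2 (by nlinarith [sq_nonneg x])
    exact mul_le_mul (mul_le_mul_of_nonneg_left he ht0) h3 (abs_nonneg _)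
      (by positivity)
  case bint =>
    have hbe : ∀ t : ℝ, t * Real.exp (-(t^2)/2) * ((t + (a+1)) * Real.exp ((a+1)*t))
        = t^2 * Real.exp ((a+1)*t - t^2/2) + (a+1) * (t^1 * Real.exp ((a+1)*t - t^2/2)) := by
      intro t
      rw [show (a+1)*t - t^2/2 = -(t^2)/2 + (a+1)*t by ring, Real.exp_add]
      ring
    have hint : Integrable (fun t : ℝ => t^2 * Real.exp ((a+1)*t - t^2/2)
        + (a+1) * (t^1 * Real.exp ((a+1)*t - t^2/2))) (volume.restrict (Set.Ioi b)) :=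
      (integrable_poly_gauss 2 (a+1) b).add
        ((integrable_poly_gauss 1 (a+1) b).const_mul (a+1))
    exact hint.congr (ae_of_all _ fun t => (hbe t).symm)
  case hdiff =>
    apply ae_of_all
    intro t x hx
    have h1 : HasDerivAt (fun x : ℝ => -(t^2 + x^2)/2) (-x) x := by
      have h := (((hasDerivAt_pow 2 x).const_add (t^2)).neg.div_const 2)
      refine h.congr_deriv ?_
      push_cast
      ring
    have h3 : HasDerivAt (fun x : ℝ => besselI0 (x*t)) (besselI1 (x*t) * t) x :=
      (hasDerivAt_besselI0 (x*t)).comp (h := fun x : ℝ => x * t) x (hasDerivAt_mul_const (x := x) t)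
    have h4 := (h1.exp.const_mul t).mul h3
    refine h4.congr_deriv ?_
    ring
  -- now rewrite goal
  simp only [marcumQ]
  have hval : (∫ t in Set.Ioi b, t * Real.exp (-(t^2 + a^2)/2) *
      (t * besselI1 (a*t) - a * besselI0 (a*t)))
      = b * Real.exp (-(a ^ 2 + b ^ 2) / 2) * besselI1 (a * b) := by
    have hGd : ∀ t ∈ Set.Ici b, HasDerivAt
        (fun t : ℝ => -(1/a) * (Real.exp (-(t^2 + a^2)/2) * (a*t * besselI1 (a*t))))
        (t * Real.exp (-(t^2 + a^2)/2) * (t * besselI1 (a*t) - a * besselI0 (a*t))) t := by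
      intro t _
      have h1 : HasDerivAt (fun t : ℝ => -(t^2 + a^2)/2) (-t) t := by
        have h := (((hasDerivAt_pow 2 t).add_const (a^2)).neg.div_const 2)
        refine h.congr_deriv ?_
        push_cast
        ring
      have hin : HasDerivAt (fun t : ℝ => a*t) a t := by
        simpa using (hasDerivAt_id t).const_mul a
      have h3 : HasDerivAt (fun t : ℝ => a*t * besselI1 (a*t))
          ((a*t) * besselI0 (a*t) * a) t :=
        (hasDerivAt_mul_besselI1 (a*t)).comp t hin
      have h4 := (h1.exp.mul h3).const_mul (-(1/a))
      refine h4.congr_deriv ?_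
      field_simp
      ring
    have hGt : Tendsto
        (fun t : ℝ => -(1/a) * (Real.exp (-(t^2 + a^2)/2) * (a*t * besselI1 (a*t))))
        atTop (nhds 0) := by
      apply squeeze_zero_norm' ?_ (tendsto_poly_gauss 1 a)
      filter_upwards [eventually_ge_atTop 0] with t ht0
      have hI1 : |besselI1 (a*t)| ≤ Real.exp (a*t) := by
        refine (abs_besselI1_le _).trans ?_
        rw [abs_of_nonneg (mul_nonneg ha.le ht0)]
      rw [Real.norm_eq_abs, abs_mul, abs_neg, abs_of_pos (by positivity : (0:ℝ) < 1/a),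
        abs_mul, abs_of_pos (Real.exp_pos _), abs_mul,
        abs_of_nonneg (mul_nonneg ha.le ht0)]
      calc 1/a * (Real.exp (-(t^2 + a^2)/2) * (a*t * |besselI1 (a*t)|))
          ≤ 1/a * (Real.exp (-(t^2)/2) * (a*t * Real.exp (a*t))) := by
            apply mul_le_mul_of_nonneg_left _ (by positivity)
            apply mul_le_mul (Real.exp_le_exp.2 (by nlinarith [sq_nonneg a]))
              (mul_le_mul_of_nonneg_left hI1 (mul_nonneg ha.le ht0))
              (by positivity) (by positivity)
        _ = t^1 * Real.exp (a*t - t^2/2) := by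
            rw [show a*t - t^2/2 = -(t^2)/2 + a*t by ring, Real.exp_add]
            field_simp
    have hFTC := integral_Ioi_of_hasDerivAt_of_tendsto' hGd key.1 hGt
    rw [hFTC]
    rw [show -(b^2 + a^2) = -(a^2 + b^2) by ring]
    field_simp
    ring
  rw [← hval]
  exact key.2
end

section
/- For every fixed b > 0, the map a ↦ Q(a,b) is strictly increasing on (0,∞). -/
open Real MeasureTheory Filter

namespace MQaux

noncomputable def cc (a : ℝ) (k : ℕ) : ℝ := Real.exp (-a ^ 2 / 2) * (a ^ 2 / 2) ^ k / (Nat.factorial k : ℝ)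
noncomputable def gg (k : ℕ) (t : ℝ) : ℝ := t * (t ^ 2 / 2) ^ k / (Nat.factorial k : ℝ) * Real.exp (-t ^ 2 / 2)
noncomputable def dd (b : ℝ) (j : ℕ) : ℝ := Real.exp (-b ^ 2 / 2) * (b ^ 2 / 2) ^ j / (Nat.factorial j : ℝ)

lemma exp_tsum (x : ℝ) : ∑' n : ℕ, x ^ n / (Nat.factorial n : ℝ) = Real.exp x := by
  rw [Real.exp_eq_exp_ℝ, NormedSpace.exp_eq_tsum_div]

lemma summable_pow_div_fac (x : ℝ) : Summable (fun n : ℕ => x ^ n / (Nat.factorial n : ℝ)) := by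
  simpa using Real.summable_pow_div_factorial x

lemma cc_eq (a : ℝ) : cc a = fun k => Real.exp (-a ^ 2 / 2) * ((a ^ 2 / 2) ^ k / (Nat.factorial k : ℝ)) := by
  funext k; rw [cc, mul_div_assoc]

lemma summable_cc (a : ℝ) : Summable (cc a) := by
  rw [cc_eq]
  exact (summable_pow_div_fac _).mul_left _

lemma tsum_cc (a : ℝ) : ∑' k, cc a k = 1 := by
  rw [cc_eq, tsum_mul_left, exp_tsum, ← Real.exp_add]
  ring_nf
  exact Real.exp_zero

lemma cc_nonneg (a : ℝ) (k : ℕ) : 0 ≤ cc a k := by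
  unfold cc; positivity

lemma dd_nonneg (b : ℝ) (j : ℕ) : 0 ≤ dd b j := by
  unfold dd; positivity

lemma summable_dd (b : ℝ) : Summable (dd b) := summable_cc b

lemma tsum_dd (b : ℝ) : ∑' j, dd b j = 1 := tsum_cc b

lemma sum_dd_le (b : ℝ) (n : ℕ) : ∑ j ∈ Finset.range n, dd b j ≤ 1 := by
  rw [← tsum_dd b]
  exact Summable.sum_le_tsum _ (fun j _ => dd_nonneg b j) (summable_dd b)

lemma gg_nonneg (k : ℕ) {t : ℝ} (ht : 0 ≤ t) : 0 ≤ gg k t := by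
  unfold gg; positivity

lemma integrand_eq (a t : ℝ) :
    t * Real.exp (-(t ^ 2 + a ^ 2) / 2) * besselI0 (a * t) = ∑' k, cc a k * gg k t := by
  rw [besselI0, ← tsum_mul_left]
  congr 1; funext k
  have h2 : Real.exp (-(t ^ 2 + a ^ 2) / 2) = Real.exp (-a ^ 2 / 2) * Real.exp (-t ^ 2 / 2) := by
    rw [← Real.exp_add]; ring_nf
  have hk : (Nat.factorial k : ℝ) ≠ 0 := Nat.cast_ne_zero.mpr (Nat.factorial_ne_zero k)
  rw [h2, cc, gg, pow_mul]
  have h4 : (2:ℝ) ^ (k * 2) = 4 ^ k := by rw [pow_mul']; norm_num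
  field_simp
  ring_nf
  congr 1; rw [pow_mul']; norm_num

lemma continuous_gg (k : ℕ) : Continuous (gg k) := by
  unfold gg
  fun_prop

lemma integrableOn_gg (k : ℕ) {b : ℝ} (hb : 0 < b) : IntegrableOn (gg k) (Set.Ioi b) := by
  have h0 : IntegrableOn (fun t : ℝ => t ^ ((2 * k + 1 : ℕ) : ℝ) * Real.exp (-(1/2) * t ^ 2))
      (Set.Ioi (0:ℝ)) :=
    integrableOn_rpow_mul_exp_neg_mul_sq (by norm_num) (by
      have : (0:ℝ) ≤ ((2 * k + 1 : ℕ) : ℝ) := Nat.cast_nonneg _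
      linarith)
  have h1 : IntegrableOn (fun t : ℝ => (1:ℝ) / (2 ^ k * (Nat.factorial k : ℝ)) *
      (t ^ ((2 * k + 1 : ℕ) : ℝ) * Real.exp (-(1/2) * t ^ 2))) (Set.Ioi b) :=
    (h0.mono_set (Set.Ioi_subset_Ioi hb.le)).const_mul _
  refine h1.congr_fun (fun t ht => ?_) measurableSet_Ioi
  have hk : (Nat.factorial k : ℝ) ≠ 0 := Nat.cast_ne_zero.mpr (Nat.factorial_ne_zero k)
  beta_reduce; rw [Real.rpow_natCast, gg]
  rw [show ((2 * k + 1 : ℕ) : ℕ) = 2 * k + 1 from rfl]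
  rw [pow_succ, pow_mul]
  field_simp
  ring
  rw [mul_assoc (t * t ^ (k * 2)), ← mul_pow]; norm_num

lemma hasDerivAt_HH (k : ℕ) (t : ℝ) :
    HasDerivAt (fun t : ℝ => Real.exp (-t ^ 2 / 2) * (t ^ 2 / 2) ^ (k+1) / (Nat.factorial (k+1) : ℝ))
      (gg k t - gg (k+1) t) t := by
  have hsq : HasDerivAt (fun t : ℝ => t ^ 2 / 2) t t := by
    refine ((hasDerivAt_pow 2 t).div_const 2).congr_deriv ?_
    push_cast; ring
  have hexp : HasDerivAt (fun t : ℝ => Real.exp (-t ^ 2 / 2)) (-t * Real.exp (-t ^ 2 / 2)) t := by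
    have h1 : HasDerivAt (fun t : ℝ => -t ^ 2 / 2) (-t) t := by
      refine (((hasDerivAt_pow 2 t).neg).div_const 2).congr_deriv ?_
      push_cast; ring
    simpa [mul_comm, Function.comp_def] using (Real.hasDerivAt_exp _).comp t h1
  have hpow : HasDerivAt (fun t : ℝ => (t ^ 2 / 2) ^ (k+1)) ((k+1) * (t ^ 2 / 2) ^ k * t) t := by
    have := (hasDerivAt_pow (k+1) (t ^ 2 / 2)).comp t hsq
    simpa [Nat.add_sub_cancel, Function.comp_def] using this
  have h := ((hexp.mul hpow).div_const (Nat.factorial (k+1) : ℝ))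
  refine h.congr_deriv ?_
  have hk : (Nat.factorial k : ℝ) ≠ 0 := Nat.cast_ne_zero.mpr (Nat.factorial_ne_zero k)
  have hk1 : (Nat.factorial (k+1) : ℝ) ≠ 0 := Nat.cast_ne_zero.mpr (Nat.factorial_ne_zero (k+1))
  have hfac : (Nat.factorial (k+1) : ℝ) = (k+1) * (Nat.factorial k : ℝ) := by
    rw [Nat.factorial_succ]; push_cast; ring
  rw [gg, gg, hfac]
  field_simp
  ring

lemma tendsto_HH (k : ℕ) :
    Tendsto (fun t : ℝ => Real.exp (-t ^ 2 / 2) * (t ^ 2 / 2) ^ (k+1) / (Nat.factorial (k+1) : ℝ))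
      atTop (nhds 0) := by
  have hcomp : Tendsto (fun t : ℝ => t ^ 2 / 2) atTop atTop := by
    apply Filter.Tendsto.atTop_div_const (by norm_num)
    exact tendsto_pow_atTop (by norm_num)
  have h0 : Tendsto (fun x : ℝ => x ^ (k+1) * Real.exp (-x)) atTop (nhds 0) :=
    tendsto_pow_mul_exp_neg_atTop_nhds_zero (k+1)
  have h1 := (h0.comp hcomp).div_const (Nat.factorial (k+1) : ℝ)
  simp only [Function.comp_def, zero_div] at h1
  convert h1 using 2 with t
  rw [neg_div]
  ring

lemma integral_gg {b : ℝ} (hb : 0 < b) (k : ℕ) :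
    ∫ t in Set.Ioi b, gg k t = ∑ j ∈ Finset.range (k+1), dd b j := by
  induction k with
  | zero =>
    have hderiv : ∀ x ∈ Set.Ici b, HasDerivAt (fun t : ℝ => -Real.exp (-t ^ 2 / 2)) (gg 0 x) x := by
      intro x _
      have h1 : HasDerivAt (fun t : ℝ => -t ^ 2 / 2) (-x) x := by
        refine (((hasDerivAt_pow 2 x).neg).div_const 2).congr_deriv ?_
        push_cast; ring
      have := ((Real.hasDerivAt_exp _).comp x h1).neg
      refine this.congr_deriv ?_
      rw [gg]
      simp
      ring
    have htend : Tendsto (fun t : ℝ => -Real.exp (-t ^ 2 / 2)) atTop (nhds 0) := by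
      have hsq : Tendsto (fun t : ℝ => t ^ 2 / 2) atTop atTop := by
        apply Filter.Tendsto.atTop_div_const (by norm_num)
        exact tendsto_pow_atTop (by norm_num)
      have hbot : Tendsto (fun t : ℝ => -t ^ 2 / 2) atTop atBot := by
        have := tendsto_neg_atTop_atBot.comp hsq
        simpa [Function.comp_def, neg_div] using this
      have := (Real.tendsto_exp_atBot.comp hbot).neg
      simpa [Function.comp_def] using this
    rw [MeasureTheory.integral_Ioi_of_hasDerivAt_of_tendsto' hderiv (integrableOn_gg 0 hb) htend]
    simp [dd]
  | succ k ih =>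
    have hderiv : ∀ x ∈ Set.Ici b,
        HasDerivAt (fun t : ℝ => Real.exp (-t ^ 2 / 2) * (t ^ 2 / 2) ^ (k+1) / (Nat.factorial (k+1) : ℝ))
          (gg k x - gg (k+1) x) x := fun x _ => hasDerivAt_HH k x
    have hint : IntegrableOn (fun t => gg k t - gg (k+1) t) (Set.Ioi b) :=
      (integrableOn_gg k hb).sub (integrableOn_gg (k+1) hb)
    have := MeasureTheory.integral_Ioi_of_hasDerivAt_of_tendsto' hderiv hint (tendsto_HH k)
    rw [MeasureTheory.integral_sub (integrableOn_gg k hb) (integrableOn_gg (k+1) hb), ih] at this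
    rw [Finset.sum_range_succ]
    have hdd : dd b (k+1) = Real.exp (-b ^ 2 / 2) * (b ^ 2 / 2) ^ (k+1) / (Nat.factorial (k+1) : ℝ) := rfl
    linarith [this]


lemma marcumQ_series {a b : ℝ} (hb : 0 < b) :
    marcumQ a b = ∑' k, cc a k * ∑ j ∈ Finset.range (k+1), dd b j := by
  have hmeas : ∀ k : ℕ, AEStronglyMeasurable (fun t => cc a k * gg k t)
      (volume.restrict (Set.Ioi b)) :=
    fun k => ((continuous_const.mul (continuous_gg k)).aestronglyMeasurable).restrict
  have hGle : ∀ k : ℕ, ∫ t in Set.Ioi b, gg k t ≤ 1 := by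
    intro k
    rw [integral_gg hb k]
    exact sum_dd_le b (k+1)
  have hnorm : ∀ k : ℕ, ∫⁻ t in Set.Ioi b, ‖cc a k * gg k t‖₊ ≤ ENNReal.ofReal (cc a k) := by
    intro k
    have hnn : 0 ≤ᵐ[volume.restrict (Set.Ioi b)] fun t => cc a k * gg k t := by
      filter_upwards [ae_restrict_mem measurableSet_Ioi] with t ht
      exact mul_nonneg (cc_nonneg a k) (gg_nonneg k (hb.le.trans (le_of_lt ht)))
    have hint : Integrable (fun t => cc a k * gg k t) (volume.restrict (Set.Ioi b)) :=
      (integrableOn_gg k hb).const_mul _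
    have h1 : ∫⁻ t in Set.Ioi b, ‖cc a k * gg k t‖₊
        = ENNReal.ofReal (∫ t in Set.Ioi b, cc a k * gg k t) := by
      rw [MeasureTheory.ofReal_integral_eq_lintegral_ofReal hint hnn]
      apply lintegral_congr_ae
      filter_upwards [hnn] with t ht
      rw [← enorm_eq_nnnorm, ← ofReal_norm_eq_enorm, Real.norm_eq_abs, abs_of_nonneg ht]
    rw [h1, MeasureTheory.integral_const_mul]
    apply ENNReal.ofReal_le_ofReal
    calc cc a k * ∫ t in Set.Ioi b, gg k t ≤ cc a k * 1 :=
          mul_le_mul_of_nonneg_left (hGle k) (cc_nonneg a k)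
      _ = cc a k := mul_one _
  have hsum : ∑' k, ∫⁻ t in Set.Ioi b, ‖cc a k * gg k t‖₊ ≠ ⊤ := by
    apply ne_top_of_le_ne_top _ (ENNReal.tsum_le_tsum hnorm)
    rw [← ENNReal.ofReal_tsum_of_nonneg (cc_nonneg a) (summable_cc a), tsum_cc]
    exact ENNReal.ofReal_ne_top
  have hQ : marcumQ a b = ∫ t in Set.Ioi b, ∑' k, cc a k * gg k t := by
    rw [marcumQ]
    congr 1
    funext t
    exact integrand_eq a t
  rw [hQ, MeasureTheory.integral_tsum hmeas hsum]
  congr 1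
  funext k
  rw [MeasureTheory.integral_const_mul, integral_gg hb k]

noncomputable def TT (a : ℝ) (j : ℕ) : ℝ := ∑' k, if j ≤ k then cc a k else 0

lemma summable_ite_cc (a : ℝ) (j : ℕ) : Summable (fun k => if j ≤ k then cc a k else 0) := by
  apply Summable.of_nonneg_of_le _ _ (summable_cc a)
  · intro k; split <;> simp [cc_nonneg]
  · intro k; split <;> simp [cc_nonneg]

lemma TT_nonneg (a : ℝ) (j : ℕ) : 0 ≤ TT a j :=
  tsum_nonneg (fun k => by split <;> simp [cc_nonneg])

lemma TT_le_one (a : ℝ) (j : ℕ) : TT a j ≤ 1 := by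
  rw [← tsum_cc a]
  apply Summable.tsum_le_tsum _ (summable_ite_cc a j) (summable_cc a)
  intro k; split <;> simp [cc_nonneg]

lemma summable_dd_TT (a b : ℝ) : Summable (fun j => dd b j * TT a j) := by
  apply Summable.of_nonneg_of_le
    (fun j => mul_nonneg (dd_nonneg b j) (TT_nonneg a j)) _ (summable_dd b)
  intro j
  calc dd b j * TT a j ≤ dd b j * 1 :=
        mul_le_mul_of_nonneg_left (TT_le_one a j) (dd_nonneg b j)
    _ = dd b j := mul_one _

lemma marcumQ_rep {a b : ℝ} (hb : 0 < b) :
    marcumQ a b = ∑' j, dd b j * TT a j := by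
  classical
  set F : ℕ × ℕ → ℝ := fun p => if p.1 ≤ p.2 then dd b p.1 * cc a p.2 else 0 with hF
  have hFnn : 0 ≤ F := by
    intro p
    simp only [hF]
    split <;> [exact mul_nonneg (dd_nonneg b _) (cc_nonneg a _); exact le_rfl]
  have hrow : ∀ j : ℕ, (fun k => F (j, k)) = fun k => dd b j * (if j ≤ k then cc a k else 0) := by
    intro j; funext k
    simp only [hF, mul_ite, mul_zero]
  have hslice : ∀ j, Summable fun k => F (j, k) := by
    intro j
    rw [hrow j]
    exact (summable_ite_cc a j).mul_left _
  have hrowsum : ∀ j : ℕ, ∑' k, F (j, k) = dd b j * TT a j := by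
    intro j
    rw [hrow j, tsum_mul_left, TT]
  have hsummableF : Summable F := by
    rw [summable_prod_of_nonneg hFnn]
    refine ⟨hslice, ?_⟩
    apply Summable.congr (summable_dd_TT a b)
    intro j
    exact (hrowsum j).symm
  have hcol : ∀ k : ℕ, ∑' j, F (j, k) = cc a k * ∑ j ∈ Finset.range (k+1), dd b j := by
    intro k
    have h1 : ∑' j, F (j, k) = ∑ j ∈ Finset.range (k+1), F (j, k) := by
      apply tsum_eq_sum
      intro j hj
      simp only [Finset.mem_range, not_lt] at hj
      simp only [hF]
      rw [if_neg]
      omega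
    rw [h1, Finset.mul_sum]
    apply Finset.sum_congr rfl
    intro j hj
    simp only [Finset.mem_range] at hj
    simp only [hF]
    rw [if_pos (by omega)]
    ring
  calc marcumQ a b = ∑' k, cc a k * ∑ j ∈ Finset.range (k+1), dd b j := marcumQ_series hb
    _ = ∑' (k) (j), F (j, k) := by
        congr 1; funext k; exact (hcol k).symm
    _ = ∑' (j) (k), F (j, k) := by
        apply Summable.tsum_comm
        exact hsummableF
    _ = ∑' j, dd b j * TT a j := by
        congr 1; funext j; exact hrowsum j


noncomputable def phi (j : ℕ) (x : ℝ) : ℝ := Real.exp (-x) * ∑ k ∈ Finset.range j, x ^ k / (Nat.factorial k : ℝ)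

lemma hasDerivAt_P (j : ℕ) (x : ℝ) :
    HasDerivAt (fun x : ℝ => ∑ k ∈ Finset.range (j+1), x ^ k / (Nat.factorial k : ℝ))
      (∑ k ∈ Finset.range j, x ^ k / (Nat.factorial k : ℝ)) x := by
  have h : HasDerivAt (fun x : ℝ => ∑ k ∈ Finset.range (j+1), x ^ k / (Nat.factorial k : ℝ))
      (∑ k ∈ Finset.range (j+1), (k : ℝ) * x ^ (k-1) / (Nat.factorial k : ℝ)) x := by
    apply HasDerivAt.fun_sum
    intro k _
    exact (hasDerivAt_pow k x).div_const _
  convert h using 1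
  rw [Finset.sum_range_succ']
  simp only [Nat.cast_zero, zero_mul, pow_zero, Nat.factorial_zero, Nat.cast_one, zero_div, add_zero]
  apply Finset.sum_congr rfl
  intro k _
  have hfac : (Nat.factorial (k+1) : ℝ) = (k+1) * (Nat.factorial k : ℝ) := by
    rw [Nat.factorial_succ]; push_cast; ring
  have hk : (Nat.factorial k : ℝ) ≠ 0 := Nat.cast_ne_zero.mpr (Nat.factorial_ne_zero k)
  rw [Nat.add_sub_cancel, hfac]
  push_cast
  field_simp

lemma hasDerivAt_phi (j : ℕ) (x : ℝ) :
    HasDerivAt (phi (j+1)) (-(Real.exp (-x) * x ^ j / (Nat.factorial j : ℝ))) x := by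
  have hexp : HasDerivAt (fun x : ℝ => Real.exp (-x)) (-Real.exp (-x)) x := by
    simpa [Function.comp_def] using (Real.hasDerivAt_exp (-x)).comp x (hasDerivAt_neg x)
  have h := hexp.mul (hasDerivAt_P j x)
  refine h.congr_deriv ?_
  rw [Finset.sum_range_succ]
  ring

lemma continuous_phi (j : ℕ) : Continuous (phi j) := by
  unfold phi
  fun_prop

lemma phi_antitoneOn (j : ℕ) : AntitoneOn (phi (j+1)) (Set.Ici 0) := by
  apply antitoneOn_of_deriv_nonpos (convex_Ici 0) (continuous_phi (j+1)).continuousOn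
  · intro x _
    exact (hasDerivAt_phi j x).differentiableAt.differentiableWithinAt
  · intro x hx
    rw [interior_Ici] at hx
    rw [(hasDerivAt_phi j x).deriv]
    have : (0:ℝ) ≤ Real.exp (-x) * x ^ j / (Nat.factorial j : ℝ) := by
      have hx' : (0:ℝ) ≤ x := le_of_lt hx
      positivity
    linarith

lemma TT_eq (a : ℝ) (j : ℕ) : TT a j = 1 - phi j (a ^ 2 / 2) := by
  classical
  set f1 : ℕ → ℝ := fun k => if j ≤ k then cc a k else 0 with hf1
  set f2 : ℕ → ℝ := fun k => if k < j then cc a k else 0 with hf2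
  have hadd : ∀ k, f1 k + f2 k = cc a k := by
    intro k
    simp only [hf1, hf2]
    by_cases h : j ≤ k
    · rw [if_pos h, if_neg (by omega)]; ring
    · rw [if_neg h, if_pos (by omega)]; ring
  have hs2 : Summable f2 := by
    apply summable_of_ne_finset_zero (s := Finset.range j)
    intro k hk
    simp only [Finset.mem_range, not_lt] at hk
    simp only [hf2]
    rw [if_neg (by omega)]
  have hs1 : Summable f1 := summable_ite_cc a j
  have hsum : ∑' k, f1 k + ∑' k, f2 k = 1 := by
    rw [← Summable.tsum_add hs1 hs2, ← tsum_cc a]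
    congr 1
    funext k
    exact hadd k
  have hf2val : ∑' k, f2 k = phi j (a ^ 2 / 2) := by
    have h1 : ∑' k, f2 k = ∑ k ∈ Finset.range j, f2 k := by
      apply tsum_eq_sum
      intro k hk
      simp only [Finset.mem_range, not_lt] at hk
      simp only [hf2]
      rw [if_neg (by omega)]
    rw [h1, phi, Finset.mul_sum]
    apply Finset.sum_congr rfl
    intro k hk
    simp only [Finset.mem_range] at hk
    simp only [hf2]
    rw [if_pos hk, cc]
    rw [show -(a ^ 2 / 2) = -a ^ 2 / 2 by ring]
    ring
  have : TT a j = ∑' k, f1 k := rfl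
  rw [this]
  linarith [hsum, hf2val]

lemma TT_mono {a1 a2 : ℝ} (h0 : 0 ≤ a1) (h12 : a1 ≤ a2) (j : ℕ) : TT a1 j ≤ TT a2 j := by
  rw [TT_eq, TT_eq]
  cases j with
  | zero => simp [phi]
  | succ m =>
    apply sub_le_sub_left
    have hx1 : a1 ^ 2 / 2 ∈ Set.Ici (0:ℝ) := by
      simp only [Set.mem_Ici]; positivity
    have hx2 : a2 ^ 2 / 2 ∈ Set.Ici (0:ℝ) := by
      have h02 : 0 ≤ a2 := h0.trans h12
      simp only [Set.mem_Ici]; positivity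
    have hle : a1 ^ 2 / 2 ≤ a2 ^ 2 / 2 := by
      have := pow_le_pow_left₀ h0 h12 2
      linarith
    exact phi_antitoneOn m hx1 hx2 hle

lemma TT_strict {a1 a2 : ℝ} (h0 : 0 < a1) (h12 : a1 < a2) : TT a1 1 < TT a2 1 := by
  rw [TT_eq, TT_eq]
  have h1 : phi 1 (a2 ^ 2 / 2) < phi 1 (a1 ^ 2 / 2) := by
    simp only [phi, Finset.sum_range_one, pow_zero, Nat.factorial_zero, Nat.cast_one]
    have hlt : a1 ^ 2 < a2 ^ 2 := by
      apply pow_lt_pow_left₀ h12 h0.le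
      norm_num
    simp only [mul_div_assoc, div_one, mul_one]
    apply Real.exp_lt_exp.mpr
    linarith
  linarith

end MQaux

theorem marcumQ_strictMono_first_arg (b : ℝ) (hb : 0 < b) :
    StrictMonoOn (fun a => marcumQ a b) (Set.Ioi 0) := by
  intro a1 ha1 a2 ha2 h12
  simp only [Set.mem_Ioi] at ha1 ha2
  simp only
  rw [MQaux.marcumQ_rep hb, MQaux.marcumQ_rep hb]
  apply Summable.tsum_lt_tsum_of_nonneg (i := 1)
  · intro j
    exact mul_nonneg (MQaux.dd_nonneg b j) (MQaux.TT_nonneg a1 j)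
  · intro j
    exact mul_le_mul_of_nonneg_left (MQaux.TT_mono ha1.le h12.le j) (MQaux.dd_nonneg b j)
  · apply mul_lt_mul_of_pos_left (MQaux.TT_strict ha1 h12)
    rw [MQaux.dd]
    positivity
  · exact MQaux.summable_dd_TT a2 b
end
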